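/- arXiv:2103.04470 — 2 statements merged into one kernel-verified Lean document; each statement's English description precedes it below -/
import Mathlib

section
/- Let k ≥ 0 and n = 2k+2. If X ⊆ S¹ has n points and satisfies t_b(X) = kπ/(k+1) and t_d(X) = π, then X is a regular n-gon, i.e., the geodesic distance between consecutive points of X (in cyclic order) is 2π/(2k+2) for every pair of consecutive points. -/
open AddCircle

private lemma two_pi_pos : (0:ℝ) < 2 * Real.pi := by positivity

private lemma norm_coe_le_abs (r : ℝ) : ‖(r : AddCircle (2 * Real.pi))‖ ≤ |r| := by
  rw [AddCircle.norm_eq' (2 * Real.pi) two_pi_pos]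
  have h := round_le ((2 * Real.pi)⁻¹ * r) 0
  simp only [Int.cast_zero, sub_zero] at h
  calc 2 * Real.pi * |(2 * Real.pi)⁻¹ * r - round ((2 * Real.pi)⁻¹ * r)|
      ≤ 2 * Real.pi * |(2 * Real.pi)⁻¹ * r| :=
        mul_le_mul_of_nonneg_left h two_pi_pos.le
    _ = |r| := by
        rw [abs_mul, abs_inv, abs_of_pos two_pi_pos]
        field_simp

private lemma norm_le_pi (z : AddCircle (2 * Real.pi)) : ‖z‖ ≤ Real.pi := by
  have h := AddCircle.norm_le_half_period (p := 2 * Real.pi) (x := z) two_pi_pos.ne'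
  rwa [abs_of_pos two_pi_pos, show 2 * Real.pi / 2 = Real.pi by ring] at h

private lemma norm_coe_pi : ‖((Real.pi : ℝ) : AddCircle (2 * Real.pi))‖ = Real.pi := by
  have h := AddCircle.norm_half_period_eq (p := 2 * Real.pi)
  rwa [show 2 * Real.pi / 2 = Real.pi by ring, abs_of_pos two_pi_pos,
    show 2 * Real.pi / 2 = Real.pi by ring] at h

private lemma coe_eq_pi_of_norm_eq {z : AddCircle (2 * Real.pi)} (h : ‖z‖ = Real.pi) :
    z = ((Real.pi : ℝ) : AddCircle (2 * Real.pi)) := by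
  obtain ⟨r⟩ := z
  have hz : (Quot.mk _ r : AddCircle (2 * Real.pi)) = (r : AddCircle (2 * Real.pi)) := rfl
  rw [hz] at h ⊢
  rw [AddCircle.norm_eq' _ two_pi_pos] at h
  set u := (2 * Real.pi)⁻¹ * r with hu
  have hru : r = 2 * Real.pi * u := by rw [hu]; field_simp
  have h2 : |u - round u| = 1 / 2 := by
    have : 2 * Real.pi * |u - round u| = 2 * Real.pi * (1 / 2) := by
      rw [h]; ring
    exact mul_left_cancel₀ two_pi_pos.ne' this
  have hmem : r - Real.pi ∈ AddSubgroup.zmultiples (2 * Real.pi) := by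
    rcases abs_eq (by norm_num : (0:ℝ) ≤ 1/2) |>.mp h2 with h3 | h3
    · refine AddSubgroup.mem_zmultiples_iff.mpr ⟨round u, ?_⟩
      have h4 : r = 2 * Real.pi * (round u : ℝ) + Real.pi := by
        rw [hru]; linear_combination 2 * Real.pi * h3
      rw [zsmul_eq_mul]; linarith
    · refine AddSubgroup.mem_zmultiples_iff.mpr ⟨round u - 1, ?_⟩
      have h4 : r = 2 * Real.pi * (round u : ℝ) - Real.pi := by
        rw [hru]; linear_combination 2 * Real.pi * h3
      rw [zsmul_eq_mul]; push_cast; linarith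
  exact (QuotientAddGroup.eq_iff_sub_mem).mpr hmem

/-- The largest distance from `x` to any point of `X`. -/
noncomputable def ptTd (X : Type*) [MetricSpace X] (x : X) : ℝ :=
  sSup (Set.range fun y => dist x y)

/-- The second largest distance (counted with multiplicity over points) from `x`
to points of `X`. -/
noncomputable def ptTb (X : Type*) [MetricSpace X] (x : X) : ℝ :=
  sSup {r : ℝ | ∃ y z : X, y ≠ z ∧ r = min (dist x y) (dist x z)}

/-- `t_b(X) = max_{x ∈ X} t_b(x)`. -/
noncomputable def tbX (X : Type*) [MetricSpace X] : ℝ :=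
  sSup (Set.range (ptTb X))

/-- `t_d(X) = min_{x ∈ X} t_d(x)`. -/
noncomputable def tdX (X : Type*) [MetricSpace X] : ℝ :=
  sInf (Set.range (ptTd X))


set_option maxHeartbeats 1000000 in
/-- If `X ⊆ S¹` has `n = 2k+2` points with `t_b(X) = kπ/(k+1)` and `t_d(X) = π`,
then `X` is a regular `n`-gon: its points are equally spaced at arc distance
`2π/(2k+2)`. -/
theorem regular_ngon_of_extremal (k : ℕ)
    (s : Finset (AddCircle (2 * Real.pi))) (hcard : s.card = 2 * k + 2)
    (hb : tbX ↥s = (k : ℝ) * Real.pi / (k + 1)) (hd : tdX ↥s = Real.pi) :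
    ∃ θ : AddCircle (2 * Real.pi),
      s = Finset.image
        (fun i : Fin (2 * k + 2) =>
          θ + (((i : ℕ) * (2 * Real.pi / (2 * k + 2)) : ℝ) : AddCircle (2 * Real.pi)))
        Finset.univ := by
  have hπ := Real.pi_pos
  have hp : (0:ℝ) < 2 * Real.pi := two_pi_pos
  haveI : Fact ((0:ℝ) < 2 * Real.pi) := ⟨hp⟩
  set cπ : AddCircle (2 * Real.pi) := ((Real.pi : ℝ) : AddCircle (2 * Real.pi)) with hcπ
  have hππ : cπ + cπ = 0 := by
    rw [hcπ, ← AddCircle.coe_add, show Real.pi + Real.pi = 2 * Real.pi by ring,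
      AddCircle.coe_period]
  have hne : s.Nonempty := Finset.card_pos.mp (by rw [hcard]; omega)
  haveI : Nonempty ↥s := Finset.nonempty_coe_sort.mpr hne
  have hdist_le : ∀ x y : ↥s, dist x y ≤ Real.pi := by
    intro x y
    rw [Subtype.dist_eq, dist_eq_norm]
    exact norm_le_pi _
  -- every point has its antipode in s
  have hptTd_bdd : ∀ x : ↥s, BddAbove (Set.range fun y : ↥s => dist x y) :=
    fun x => ⟨Real.pi, by rintro r ⟨y, rfl⟩; exact hdist_le x y⟩
  have hptTd_nonneg : ∀ x : ↥s, 0 ≤ ptTd ↥s x := by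
    intro x
    have h := le_csSup (hptTd_bdd x) ⟨x, rfl⟩
    simp at h; exact h
  have hptTd_eq : ∀ x : ↥s, ptTd ↥s x = Real.pi := by
    intro x
    refine le_antisymm (Real.sSup_le (by rintro r ⟨y, rfl⟩; exact hdist_le x y) hπ.le) ?_
    have hbdd : BddBelow (Set.range (ptTd ↥s)) := ⟨0, by rintro r ⟨y, rfl⟩; exact hptTd_nonneg y⟩
    have h : tdX ↥s ≤ ptTd ↥s x := csInf_le hbdd (Set.mem_range_self x)
    rw [hd] at h
    exact h
  have hanti : ∀ x : ↥s, ∃ y : ↥s, (y : AddCircle (2 * Real.pi)) = (x : AddCircle (2 * Real.pi)) + cπ := by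
    intro x
    obtain ⟨y, hy⟩ := Set.Nonempty.csSup_mem (Set.range_nonempty _)
      (Set.finite_range fun y : ↥s => dist x y)
    refine ⟨y, ?_⟩
    have hxy : dist x y = Real.pi := hy.trans (hptTd_eq x)
    rw [Subtype.dist_eq, dist_eq_norm] at hxy
    have h2 : (x : AddCircle (2 * Real.pi)) - y = cπ := coe_eq_pi_of_norm_eq hxy
    have h4 : -cπ = cπ := neg_eq_iff_add_eq_zero.mpr hππ
    have h5 : (y : AddCircle (2 * Real.pi)) - x = cπ := by rw [← h4, ← h2]; abel
    rw [sub_eq_iff_eq_add] at h5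
    rw [h5, add_comm]
  -- the second-largest-distance bound
  have hSb : ∀ x : ↥s, ∀ r ∈ {r : ℝ | ∃ y z : ↥s, y ≠ z ∧ r = min (dist x y) (dist x z)},
      r ≤ Real.pi := by
    rintro x r ⟨y, z, -, rfl⟩
    exact le_trans (min_le_left _ _) (hdist_le x y)
  have hptTb_le : ∀ x : ↥s, ptTb ↥s x ≤ (k : ℝ) * Real.pi / (k + 1) := by
    intro x
    rw [← hb]
    exact le_csSup ⟨Real.pi, by rintro r ⟨y, rfl⟩; exact Real.sSup_le (hSb y) hπ.le⟩ ⟨x, rfl⟩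
  have hfar : ∀ x y : ↥s, (y : AddCircle (2 * Real.pi)) ≠ (x : AddCircle (2 * Real.pi)) + cπ →
      dist x y ≤ (k : ℝ) * Real.pi / (k + 1) := by
    intro x y hy
    obtain ⟨x', hx'⟩ := hanti x
    have hdxx' : dist x x' = Real.pi := by
      rw [Subtype.dist_eq, dist_eq_norm, hx']
      rw [show (x : AddCircle (2 * Real.pi)) - ((x : AddCircle (2 * Real.pi)) + cπ) = -cπ by abel,
        norm_neg]
      exact norm_coe_pi
    have hyx' : y ≠ x' := by
      intro h; exact hy (by rw [h, hx'])
    have hmin : dist x y = min (dist x y) (dist x x') := by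
      rw [hdxx', min_eq_left (hdist_le x y)]
    have hmem : dist x y ∈ {r : ℝ | ∃ y z : ↥s, y ≠ z ∧ r = min (dist x y) (dist x z)} :=
      ⟨y, x', hyx', hmin⟩
    calc dist x y ≤ ptTb ↥s x := le_csSup ⟨Real.pi, hSb x⟩ hmem
      _ ≤ _ := hptTb_le x
  -- pairwise distance lower bound
  set g : ℝ := 2 * Real.pi / (2 * (k : ℝ) + 2) with hg
  have hk1 : (0:ℝ) < (k : ℝ) + 1 := by positivity
  have hg_pos : 0 < g := by rw [hg]; positivity
  have hgk : Real.pi - (k : ℝ) * Real.pi / ((k : ℝ) + 1) = g := by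
    rw [hg]; field_simp; ring
  have hpair : ∀ x ∈ s, ∀ y ∈ s, x ≠ y → g ≤ dist x y := by
    intro x hx y hy hxy
    obtain ⟨x', hx'⟩ := hanti ⟨x, hx⟩
    have h1 : ((⟨y, hy⟩ : ↥s) : AddCircle (2 * Real.pi)) ≠ (x' : AddCircle (2 * Real.pi)) + cπ := by
      rw [hx', add_assoc, hππ, add_zero]
      exact fun h => hxy h.symm
    have h2 := hfar x' ⟨y, hy⟩ h1
    rw [Subtype.dist_eq] at h2
    have h3 : dist (x' : AddCircle (2 * Real.pi)) x = Real.pi := by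
      rw [hx', dist_eq_norm, show (x : AddCircle (2 * Real.pi)) + cπ - x = cπ by abel]
      exact norm_coe_pi
    have h4 := dist_triangle (x' : AddCircle (2 * Real.pi)) y x
    have h5 : dist y x = dist x y := dist_comm y x
    simp only [h3] at h4
    rw [← hgk]
    have h2' : dist (x' : AddCircle (2 * Real.pi)) ((⟨y, hy⟩ : ↥s) : AddCircle (2 * Real.pi))
        ≤ (k : ℝ) * Real.pi / ((k : ℝ) + 1) := h2
    simp only [Subtype.coe_mk] at h2'
    linarith [h2', h4, h5]
  -- packing argument
  set n : ℕ := 2 * k + 2 with hn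
  have hng : (n : ℝ) * g = 2 * Real.pi := by
    rw [hg, hn]; push_cast; field_simp
  set ι : AddCircle (2 * Real.pi) → ℝ :=
    fun x => ((AddCircle.equivIco (2 * Real.pi) 0 x :
      Set.Ico (0:ℝ) (0 + 2 * Real.pi)) : ℝ) with hι
  have hcoeι : ∀ x : AddCircle (2 * Real.pi), ((ι x : ℝ) : AddCircle (2 * Real.pi)) = x :=
    fun x => (AddCircle.equivIco (2 * Real.pi) 0).symm_apply_apply x
  have hιmem : ∀ x, 0 ≤ ι x ∧ ι x < 2 * Real.pi := by
    intro x
    have h := (AddCircle.equivIco (2 * Real.pi) 0 x).2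
    rw [Set.mem_Ico] at h
    exact ⟨h.1, lt_of_lt_of_eq h.2 (zero_add _)⟩
  have hιinj : Function.Injective ι := fun x y h => by rw [← hcoeι x, ← hcoeι y, h]
  set t : Finset ℝ := s.image ι with ht
  have htcard : t.card = n := by rw [ht, Finset.card_image_of_injective _ hιinj, hcard]
  set e := t.orderIsoOfFin htcard with he
  set a : Fin n → ℝ := fun i => ((e i : ↥t) : ℝ) with ha
  have ha_mono : StrictMono a := fun i j hij => Subtype.coe_lt_coe.mpr (e.strictMono hij)
  have ha_mem_t : ∀ i, a i ∈ t := fun i => (e i).2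
  have hcoe_mem : ∀ r ∈ t, ((r : ℝ) : AddCircle (2 * Real.pi)) ∈ s ∧
      ι ((r : ℝ) : AddCircle (2 * Real.pi)) = r := by
    intro r hr
    rw [ht, Finset.mem_image] at hr
    obtain ⟨x, hx, rfl⟩ := hr
    rw [hcoeι x]
    exact ⟨hx, rfl⟩
  have hmem_range : ∀ r ∈ t, 0 ≤ r ∧ r < 2 * Real.pi := by
    intro r hr
    rw [ht, Finset.mem_image] at hr
    obtain ⟨x, _, rfl⟩ := hr
    exact hιmem x
  have hcne : ∀ i j : Fin n, i ≠ j →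
      ((a i : ℝ) : AddCircle (2 * Real.pi)) ≠ ((a j : ℝ) : AddCircle (2 * Real.pi)) := by
    intro i j hij h
    apply hij
    have h2 : a i = a j := by
      rw [← (hcoe_mem _ (ha_mem_t i)).2, ← (hcoe_mem _ (ha_mem_t j)).2, h]
    exact ha_mono.injective h2
  have hgap : ∀ i j : Fin n, i < j → g ≤ a j - a i := by
    intro i j hij
    have h3 := hpair _ (hcoe_mem _ (ha_mem_t j)).1 _ (hcoe_mem _ (ha_mem_t i)).1
      (hcne j i hij.ne')
    have h4 : dist (((a j : ℝ)) : AddCircle (2 * Real.pi)) (((a i : ℝ)) : AddCircle (2 * Real.pi))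
        ≤ a j - a i := by
      rw [dist_eq_norm, ← AddCircle.coe_sub]
      refine le_trans (norm_coe_le_abs _) ?_
      rw [abs_of_pos (sub_pos.mpr (ha_mono hij))]
    linarith
  have h0n : 0 < n := by omega
  set i0 : Fin n := ⟨0, h0n⟩ with hi0
  set il : Fin n := ⟨n - 1, by omega⟩ with hil
  have hwrap : a il - a i0 ≤ 2 * Real.pi - g := by
    have hil0 : i0 ≠ il := Fin.ne_of_val_ne (show (0:ℕ) ≠ n - 1 by omega)
    have h3 := hpair _ (hcoe_mem _ (ha_mem_t il)).1 _ (hcoe_mem _ (ha_mem_t i0)).1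
      (hcne il i0 (Ne.symm hil0))
    have hmono : a i0 ≤ a il := (ha_mono.le_iff_le).mpr (by
      rw [Fin.le_def]; exact Nat.zero_le _)
    have hb1 := (hmem_range _ (ha_mem_t il)).2
    have hb2 := (hmem_range _ (ha_mem_t i0)).1
    have h4 : dist (((a il : ℝ)) : AddCircle (2 * Real.pi)) (((a i0 : ℝ)) : AddCircle (2 * Real.pi))
        ≤ 2 * Real.pi - (a il - a i0) := by
      rw [dist_eq_norm, ← AddCircle.coe_sub]
      have h5 : ((a il - a i0 - 2 * Real.pi : ℝ) : AddCircle (2 * Real.pi)) =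
          ((a il - a i0 : ℝ) : AddCircle (2 * Real.pi)) := by
        rw [AddCircle.coe_sub _ (a il - a i0) (2 * Real.pi), AddCircle.coe_period, sub_zero]
      rw [← h5]
      refine le_trans (norm_coe_le_abs _) ?_
      rw [abs_of_nonpos (by linarith)]
      linarith
    linarith
  have hstep : ∀ m : ℕ, ∀ i : ℕ, ∀ h : i + m < n,
      (m : ℝ) * g ≤ a ⟨i + m, h⟩ - a ⟨i, by omega⟩ := by
    intro m
    induction m with
    | zero => intro i h; simp
    | succ m ih =>
      intro i h
      have h1 : i + m < n := by omega
      have h2 := ih i h1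
      have h3 : g ≤ a ⟨i + m + 1, by omega⟩ - a ⟨i + m, h1⟩ :=
        hgap _ _ (Fin.mk_lt_mk.mpr (by omega))
      have he1 : (⟨i + (m + 1), h⟩ : Fin n) = ⟨i + m + 1, by omega⟩ := rfl
      rw [he1]
      push_cast
      linarith
  have ha_eq : ∀ i : Fin n, a i = a i0 + (i : ℕ) * g := by
    intro i
    have hi : (i : ℕ) < n := i.2
    have e1 : (⟨0 + (i : ℕ), by omega⟩ : Fin n) = i := by
      ext; show 0 + (i : ℕ) = (i : ℕ); omega
    have e2 : (⟨(i : ℕ) + (n - 1 - (i : ℕ)), by omega⟩ : Fin n) = il := by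
      ext; show (i : ℕ) + (n - 1 - (i : ℕ)) = n - 1; omega
    have hlow := hstep (i : ℕ) 0 (by omega)
    have hlow2 : ((i:ℕ):ℝ) * g ≤ a i - a i0 := by
      have := congrArg a e1
      linarith [hlow, this]
    have hup := hstep (n - 1 - (i : ℕ)) (i : ℕ) (by omega)
    have hcast : ((n - 1 - (i : ℕ) : ℕ) : ℝ) = (n : ℝ) - 1 - (i : ℕ) := by
      rw [Nat.cast_sub (by omega), Nat.cast_sub (by omega), Nat.cast_one]
    have h9 : ((n : ℝ) - 1 - (i:ℕ)) * g = ((n - 1 - (i : ℕ) : ℕ) : ℝ) * g := by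
      rw [hcast]
    have hup2 : ((n : ℝ) - 1 - (i:ℕ)) * g ≤ a il - a i := by
      have := congrArg a e2
      linarith [hup, this, h9]
    have hlast : a il ≤ a i0 + ((n : ℝ) - 1) * g := by
      have h7 : (2:ℝ) * Real.pi - g = ((n:ℝ) - 1) * g := by
        rw [← hng]; ring
      linarith [hwrap]
    have h8 : a i ≤ a i0 + (i:ℕ) * g := by nlinarith [hup2, hlast, hlow2]
    linarith [hlow2, h8]
  refine ⟨((a i0 : ℝ) : AddCircle (2 * Real.pi)), ?_⟩
  apply Finset.ext
  intro x
  simp only [Finset.mem_image, Finset.mem_univ, true_and]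
  constructor
  · intro hx
    have hmem : ι x ∈ t := by rw [ht]; exact Finset.mem_image_of_mem ι hx
    refine ⟨e.symm ⟨ι x, hmem⟩, ?_⟩
    have hau : a (e.symm ⟨ι x, hmem⟩) = ι x := by
      rw [ha]
      simp only [OrderIso.apply_symm_apply]
    have h6 := ha_eq (e.symm ⟨ι x, hmem⟩)
    rw [hau] at h6
    rw [← AddCircle.coe_add, ← h6, hcoeι x]
  · rintro ⟨i, rfl⟩
    have h6 := ha_eq i
    have hmem := (hcoe_mem _ (ha_mem_t i)).1
    rw [h6, AddCircle.coe_add] at hmem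
    exact hmem
end

section
/- For every pair (t_b, t_d) with 0 < t_b < t_d ≤ √2·t_b, there exists a four-point subset X of the Euclidean plane ℝ² with t_b(X) = t_b and t_d(X) = t_d. Conversely, every four-point subset X ⊆ ℝ² with t_b(X) < t_d(X) satisfies t_d(X) ≤ √2·t_b(X). -/
section general
variable {X : Type*} [MetricSpace X]

lemma dist_le_ptTd [Fintype X] (x y : X) : dist x y ≤ ptTd X x :=
  le_csSup (Set.finite_range _).bddAbove ⟨y, rfl⟩

lemma exists_ptTd_eq [Fintype X] [Nonempty X] (x : X) : ∃ y : X, ptTd X x = dist x y := by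
  obtain ⟨y, hy⟩ := (Set.range_nonempty (fun y : X => dist x y)).csSup_mem (Set.finite_range _)
  exact ⟨y, hy.symm⟩

lemma ptTd_nonneg [Fintype X] (x : X) : (0:ℝ) ≤ ptTd X x := by
  simpa using dist_le_ptTd x x

lemma tdX_le_ptTd [Fintype X] (x : X) : tdX X ≤ ptTd X x :=
  csInf_le ⟨0, by rintro r ⟨y, rfl⟩; exact ptTd_nonneg y⟩ ⟨x, rfl⟩

lemma min_dist_le_ptTb [Fintype X] {x y z : X} (h : y ≠ z) :
    min (dist x y) (dist x z) ≤ ptTb X x :=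
  by
  refine le_csSup ⟨ptTd X x, ?_⟩ ⟨y, z, h, rfl⟩
  rintro r ⟨u, v, huv, rfl⟩
  exact (min_le_left _ _).trans (dist_le_ptTd x u)

lemma ptTb_le_tbX [Fintype X] (x : X) : ptTb X x ≤ tbX X :=
  le_csSup (Set.finite_range _).bddAbove ⟨x, rfl⟩

lemma tbX_nonneg [Fintype X] [Nontrivial X] : (0:ℝ) ≤ tbX X := by
  obtain ⟨x, z, hxz⟩ := exists_pair_ne X
  have h := min_dist_le_ptTb (x := x) hxz
  rw [dist_self, min_eq_left dist_nonneg] at h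
  exact h.trans (ptTb_le_tbX x)

lemma ptTd_eq {x : X} {d : ℝ} (hub : ∀ y : X, dist x y ≤ d) (hmem : ∃ y : X, dist x y = d) :
    ptTd X x = d := by
  obtain ⟨y, hy⟩ := hmem
  exact IsGreatest.csSup_eq ⟨⟨y, hy⟩, by rintro r ⟨z, rfl⟩; exact hub z⟩

lemma ptTb_eq {x : X} {b : ℝ} (hub : ∀ y z : X, y ≠ z → min (dist x y) (dist x z) ≤ b)
    (hmem : ∃ y z : X, y ≠ z ∧ min (dist x y) (dist x z) = b) : ptTb X x = b := by
  obtain ⟨y, z, hyz, h⟩ := hmem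
  exact IsGreatest.csSup_eq ⟨⟨y, z, hyz, h.symm⟩, by rintro r ⟨u, v, huv, rfl⟩; exact hub u v huv⟩

lemma tdX_eq [Nonempty X] {d : ℝ} (h : ∀ x : X, ptTd X x = d) : tdX X = d := by
  have hr : Set.range (ptTd X) = {d} := by
    ext r; simp [h, eq_comm]
  rw [tdX, hr, csInf_singleton]

lemma tbX_eq [Nonempty X] {b : ℝ} (h : ∀ x : X, ptTb X x = b) : tbX X = b := by
  have hr : Set.range (ptTb X) = {b} := by
    ext r; simp [h, eq_comm]
  rw [tbX, hr, csSup_singleton]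

end general

section construction
variable {E : Type*} [MetricSpace E]

/-- Abstract four-point configuration realizing `(b, d)`. -/
lemma four_point_realize {A B C D : E} {b d q : ℝ}
    (hb : 0 < b) (hq : 0 < q) (hbd : b < d) (hqb : q ≤ b)
    (dAB : dist A B = b) (dAC : dist A C = q) (dAD : dist A D = d)
    (dBC : dist B C = d) (dBD : dist B D = q) (dCD : dist C D = b) :
    ∃ s : Finset E, s.card = 4 ∧ tbX ↥s = b ∧ tdX ↥s = d := by
  classical
  have hd : 0 < d := hb.trans hbd
  have nAB : A ≠ B := by rw [← dist_pos, dAB]; exact hb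
  have nAC : A ≠ C := by rw [← dist_pos, dAC]; exact hq
  have nAD : A ≠ D := by rw [← dist_pos, dAD]; exact hd
  have nBC : B ≠ C := by rw [← dist_pos, dBC]; exact hd
  have nBD : B ≠ D := by rw [← dist_pos, dBD]; exact hq
  have nCD : C ≠ D := by rw [← dist_pos, dCD]; exact hb
  have dBA : dist B A = b := by rw [dist_comm]; exact dAB
  have dCA : dist C A = q := by rw [dist_comm]; exact dAC
  have dDA : dist D A = d := by rw [dist_comm]; exact dAD
  have dCB : dist C B = d := by rw [dist_comm]; exact dBC
  have dDB : dist D B = q := by rw [dist_comm]; exact dBD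
  have dDC : dist D C = b := by rw [dist_comm]; exact dCD
  refine ⟨{A, B, C, D}, ?_, ?_, ?_⟩
  · rw [Finset.card_insert_of_notMem (by simp [nAB, nAC, nAD]),
      Finset.card_insert_of_notMem (by simp [nBC, nBD]),
      Finset.card_insert_of_notMem (by simp [nCD]), Finset.card_singleton]
  all_goals {
    have hAs : A ∈ ({A, B, C, D} : Finset E) := by simp
    have hBs : B ∈ ({A, B, C, D} : Finset E) := by simp
    have hCs : C ∈ ({A, B, C, D} : Finset E) := by simp
    have hDs : D ∈ ({A, B, C, D} : Finset E) := by simp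
    haveI : Nonempty ↥({A, B, C, D} : Finset E) := ⟨⟨A, hAs⟩⟩
    first
    | · apply tbX_eq
        rintro ⟨x, hx⟩
        have hx' : x = A ∨ x = B ∨ x = C ∨ x = D := by simpa using hx
        have main : ∀ y z : ↥({A, B, C, D} : Finset E), y ≠ z →
            min (dist (⟨x, hx⟩ : ↥({A, B, C, D} : Finset E)) y)
              (dist (⟨x, hx⟩ : ↥({A, B, C, D} : Finset E)) z) ≤ b := by
          rintro ⟨y, hy⟩ ⟨z, hz⟩ hne
          have hy' : y = A ∨ y = B ∨ y = C ∨ y = D := by simpa using hy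
          have hz' : z = A ∨ z = B ∨ z = C ∨ z = D := by simpa using hz
          rcases hx' with rfl | rfl | rfl | rfl <;>
            rcases hy' with rfl | rfl | rfl | rfl <;>
            rcases hz' with rfl | rfl | rfl | rfl <;>
            first
            | exact absurd (Subtype.ext rfl) hne
            | · simp only [Subtype.dist_eq, dist_self, dAB, dAC, dAD, dBC, dBD, dCD,
                  dBA, dCA, dDA, dCB, dDB, dDC, min_le_iff]
                first | (left; linarith) | (right; linarith)
        rcases hx' with rfl | rfl | rfl | rfl
        · exact ptTb_eq main ⟨⟨B, hBs⟩, ⟨D, hDs⟩,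
            fun h => nBD (congrArg Subtype.val h),
            by simp only [Subtype.dist_eq, dAB, dAD]; exact min_eq_left hbd.le⟩
        · exact ptTb_eq main ⟨⟨A, hAs⟩, ⟨C, hCs⟩,
            fun h => nAC (congrArg Subtype.val h),
            by simp only [Subtype.dist_eq, dBA, dBC]; exact min_eq_left hbd.le⟩
        · exact ptTb_eq main ⟨⟨D, hDs⟩, ⟨B, hBs⟩,
            fun h => nBD.symm (congrArg Subtype.val h),
            by simp only [Subtype.dist_eq, dCD, dCB]; exact min_eq_left hbd.le⟩
        · exact ptTb_eq main ⟨⟨C, hCs⟩, ⟨A, hAs⟩,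
            fun h => nAC.symm (congrArg Subtype.val h),
            by simp only [Subtype.dist_eq, dDC, dDA]; exact min_eq_left hbd.le⟩
    | · apply tdX_eq
        rintro ⟨x, hx⟩
        have hx' : x = A ∨ x = B ∨ x = C ∨ x = D := by simpa using hx
        have main : ∀ y : ↥({A, B, C, D} : Finset E),
            dist (⟨x, hx⟩ : ↥({A, B, C, D} : Finset E)) y ≤ d := by
          rintro ⟨y, hy⟩
          have hy' : y = A ∨ y = B ∨ y = C ∨ y = D := by simpa using hy
          rcases hx' with rfl | rfl | rfl | rfl <;>
            rcases hy' with rfl | rfl | rfl | rfl <;>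
            simp only [Subtype.dist_eq, dist_self, dAB, dAC, dAD, dBC, dBD, dCD,
              dBA, dCA, dDA, dCB, dDB, dDC] <;> linarith
        rcases hx' with rfl | rfl | rfl | rfl
        · exact ptTd_eq main ⟨⟨D, hDs⟩, by simp only [Subtype.dist_eq]; exact dAD⟩
        · exact ptTd_eq main ⟨⟨C, hCs⟩, by simp only [Subtype.dist_eq]; exact dBC⟩
        · exact ptTd_eq main ⟨⟨B, hBs⟩, by simp only [Subtype.dist_eq]; exact dCB⟩
        · exact ptTd_eq main ⟨⟨A, hAs⟩, by simp only [Subtype.dist_eq]; exact dDA⟩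
  }

end construction

noncomputable def planePt (x y : ℝ) : EuclideanSpace ℝ (Fin 2) :=
  (WithLp.equiv 2 (Fin 2 → ℝ)).symm ![x, y]

lemma euclid_dist (x₁ y₁ x₂ y₂ : ℝ) :
    dist (planePt x₁ y₁) (planePt x₂ y₂) =
      Real.sqrt ((x₁ - x₂) ^ 2 + (y₁ - y₂) ^ 2) := by
  rw [EuclideanSpace.dist_eq]
  simp [planePt, Fin.sum_univ_two, Real.dist_eq, sq_abs]

lemma plane_realize {b d : ℝ} (hb : 0 < b) (hbd : b < d) (hd2 : d ≤ Real.sqrt 2 * b) :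
    ∃ s : Finset (EuclideanSpace ℝ (Fin 2)), s.card = 4 ∧ tbX ↥s = b ∧ tdX ↥s = d := by
  have hs2 : Real.sqrt 2 ^ 2 = 2 := Real.sq_sqrt (by norm_num)
  have hs2n : (0:ℝ) ≤ Real.sqrt 2 := Real.sqrt_nonneg 2
  have hd : 0 < d := hb.trans hbd
  have hdsq : d ^ 2 ≤ 2 * b ^ 2 := by nlinarith
  set q : ℝ := Real.sqrt (d ^ 2 - b ^ 2) with hqdef
  have hq2 : q ^ 2 = d ^ 2 - b ^ 2 := Real.sq_sqrt (by nlinarith)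
  have hq0 : 0 < q := Real.sqrt_pos.2 (by nlinarith)
  have hqb : q ≤ b := by nlinarith
  refine four_point_realize (A := planePt 0 0)
    (B := planePt b 0) (C := planePt 0 q) (D := planePt b q) hb hq0 hbd hqb ?_ ?_ ?_ ?_ ?_ ?_
  · rw [euclid_dist, show ((0:ℝ) - b) ^ 2 + ((0:ℝ) - 0) ^ 2 = b ^ 2 by ring,
      Real.sqrt_sq hb.le]
  · rw [euclid_dist, show ((0:ℝ) - 0) ^ 2 + ((0:ℝ) - q) ^ 2 = q ^ 2 by ring,
      Real.sqrt_sq hq0.le]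
  · rw [euclid_dist, show ((0:ℝ) - b) ^ 2 + ((0:ℝ) - q) ^ 2 = d ^ 2 by nlinarith,
      Real.sqrt_sq hd.le]
  · rw [euclid_dist, show (b - (0:ℝ)) ^ 2 + ((0:ℝ) - q) ^ 2 = d ^ 2 by nlinarith,
      Real.sqrt_sq hd.le]
  · rw [euclid_dist, show (b - b) ^ 2 + ((0:ℝ) - q) ^ 2 = q ^ 2 by ring,
      Real.sqrt_sq hq0.le]
  · rw [euclid_dist, show ((0:ℝ) - b) ^ 2 + (q - q) ^ 2 = b ^ 2 by ring,
      Real.sqrt_sq hb.le]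

lemma plane_converse (s : Finset (EuclideanSpace ℝ (Fin 2))) (hcard : s.card = 4)
    (hlt : tbX ↥s < tdX ↥s) : tdX ↥s ≤ Real.sqrt 2 * tbX ↥s := by
  classical
  have hc4 : Fintype.card ↥s = 4 := by simp [hcard]
  haveI : Nonempty ↥s := by
    rw [← Fintype.card_pos_iff, hc4]; norm_num
  haveI : Nontrivial ↥s := by
    rw [← Fintype.one_lt_card_iff_nontrivial, hc4]; norm_num
  set t := tbX ↥s with ht
  set T := tdX ↥s with hT
  have ht0 : (0:ℝ) ≤ t := tbX_nonneg
  choose f hf using exists_ptTd_eq (X := ↥s)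
  have hfar : ∀ x : ↥s, t < dist x (f x) := fun x =>
    lt_of_lt_of_le hlt ((tdX_le_ptTd x).trans_eq (hf x))
  have hB : ∀ x y : ↥s, t < dist x y → y = f x := by
    intro x y hy
    by_contra hne
    have h1 := min_dist_le_ptTb (x := x) hne
    have h2 := ptTb_le_tbX x
    have h3 : t < min (dist x y) (dist x (f x)) := lt_min hy (hfar x)
    rw [← ht] at h2
    linarith
  have hff : ∀ x : ↥s, f (f x) = x := fun x =>
    (hB (f x) x (by rw [dist_comm]; exact hfar x)).symm
  obtain ⟨a⟩ := ‹Nonempty ↥s›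
  obtain ⟨c, hca, hca'⟩ : ∃ c : ↥s, c ≠ a ∧ c ≠ f a := by
    have h2 : ({a, f a} : Finset ↥s).card ≤ 2 :=
      (Finset.card_insert_le _ _).trans (by simp)
    have hne : (Finset.univ \ {a, f a} : Finset ↥s).Nonempty := by
      rw [← Finset.card_pos, Finset.card_sdiff_of_subset (Finset.subset_univ _), Finset.card_univ, hc4]
      omega
    obtain ⟨c, hc⟩ := hne
    simp only [Finset.mem_sdiff, Finset.mem_univ, Finset.mem_insert,
      Finset.mem_singleton, true_and, not_or] at hc
    exact ⟨c, hc.1, hc.2⟩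
  have hc'a : f c ≠ a := by
    intro h
    have := congrArg f h
    rw [hff] at this
    exact hca' this
  have hc'a' : f c ≠ f a := by
    intro h
    have := congrArg f h
    rw [hff, hff] at this
    exact hca this
  have d1 : dist a c ≤ t := by
    by_contra h; push_neg at h; exact hca' (hB a c h)
  have d2 : dist a (f c) ≤ t := by
    by_contra h; push_neg at h; exact hc'a' (hB a (f c) h)
  have d3 : dist c (f a) ≤ t := by
    by_contra h; push_neg at h; exact hc'a' (hB c (f a) h).symm
  have d4 : dist (f a) (f c) ≤ t := by
    by_contra h; push_neg at h
    have := hB (f a) (f c) h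
    rw [hff] at this
    exact hc'a this
  have la : T ≤ dist a (f a) := (tdX_le_ptTd a).trans_eq (hf a)
  have lc : T ≤ dist c (f c) := (tdX_le_ptTd c).trans_eq (hf c)
  have pt := EuclideanGeometry.mul_dist_le_mul_dist_add_mul_dist
    (a : EuclideanSpace ℝ (Fin 2)) (c : EuclideanSpace ℝ (Fin 2))
    ((f a) : EuclideanSpace ℝ (Fin 2)) ((f c) : EuclideanSpace ℝ (Fin 2))
  simp only [← Subtype.dist_eq] at pt
  have hT0 : (0:ℝ) < T := lt_of_le_of_lt ht0 hlt
  have h1 : T * T ≤ dist a (f a) * dist c (f c) :=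
    mul_le_mul la lc hT0.le dist_nonneg
  have h2 : dist a c * dist (f a) (f c) ≤ t * t :=
    mul_le_mul d1 d4 dist_nonneg ht0
  have h3 : dist c (f a) * dist a (f c) ≤ t * t :=
    mul_le_mul d3 d2 dist_nonneg ht0
  have key : T * T ≤ 2 * (t * t) := by linarith
  have hs2 : Real.sqrt 2 ^ 2 = 2 := Real.sq_sqrt (by norm_num)
  have hu2 : (Real.sqrt 2 * t) ^ 2 = 2 * t ^ 2 := by rw [mul_pow, hs2]
  have hupos : 0 < T + Real.sqrt 2 * t :=
    lt_of_lt_of_le hT0 (le_add_of_nonneg_right (mul_nonneg (Real.sqrt_nonneg 2) ht0))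
  nlinarith [key, hu2, hupos, hT0, ht0]

/-- Characterization of the principal persistence set of the Euclidean plane:
the pairs `(t_b(X), t_d(X))` realized by four-point subsets `X ⊆ ℝ²` with
`t_b(X) < t_d(X)` are exactly the pairs with `0 < t_b < t_d ≤ √2 · t_b`. -/
theorem plane_tb_td_characterization :
    (∀ b d : ℝ, 0 < b → b < d → d ≤ Real.sqrt 2 * b →
      ∃ s : Finset (EuclideanSpace ℝ (Fin 2)),
        s.card = 4 ∧ tbX ↥s = b ∧ tdX ↥s = d) ∧
    (∀ s : Finset (EuclideanSpace ℝ (Fin 2)), s.card = 4 →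
      tbX ↥s < tdX ↥s → tdX ↥s ≤ Real.sqrt 2 * tbX ↥s) :=
  ⟨fun _ _ hb hbd hd2 => plane_realize hb hbd hd2, plane_converse⟩
end
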